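/- Under the degeneration substitutions t = -ε⁻³(1-ε⁴T)/√2, q = ε⁻³(1+2ε²Q)/√2, p = εP/√2, α₂ = A₁, the Hamiltonian H_IV(q,p,t,α) = qp(2p-q-2t) - 2α₁p - α₂q, rescaled by ε/√2, converges as ε → 0 to H_II(Q,P,T,A) = P²/2 - (Q² + T/2)P - A₁Q, up to terms independent of Q and P; precisely, (ε/√2)H_IV = P²/2 - (Q²+T/2)P - A₁Q + c(ε,T,A) + O(ε) where c is independent of Q,P. -/
import Mathlib


/-- Under the degeneration substitutions `t = -ε⁻³(1-ε⁴T)/√2`,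
`q = ε⁻³(1+2ε²Q)/√2`, `p = εP/√2`, `α₁ = ε⁻⁶/4`, `α₂ = A₁`, the rescaled
Hamiltonian `(ε/√2)·H_IV` equals
`H_II(Q,P,T,A₁) = P²/2 - (Q²+T/2)P - A₁Q` plus a term `c(ε,T,A₀,A₁)`
independent of `Q,P` plus a term `ε·R` which is `O(ε)` as `ε → 0`. -/
theorem stmt_19 :
    ∃ (c : ℝ → ℝ → ℝ → ℝ → ℝ) (R : ℝ → ℝ → ℝ → ℝ → ℝ → ℝ → ℝ),
      (∀ T Q P A₀ A₁ : ℝ, ContinuousAt (fun ε => R ε T Q P A₀ A₁) 0) ∧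
      ∀ ε T Q P A₀ A₁ : ℝ, ε ≠ 0 → A₀ + A₁ = 1 →
        (ε / Real.sqrt 2) *
          (((ε ^ 3)⁻¹ * (1 + 2 * ε ^ 2 * Q) / Real.sqrt 2) *
              (ε * P / Real.sqrt 2) *
              (2 * (ε * P / Real.sqrt 2) -
                (ε ^ 3)⁻¹ * (1 + 2 * ε ^ 2 * Q) / Real.sqrt 2 -
                2 * (-(ε ^ 3)⁻¹ * (1 - ε ^ 4 * T) / Real.sqrt 2)) -
            2 * ((ε ^ 6)⁻¹ / 4) * (ε * P / Real.sqrt 2) -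
            A₁ * ((ε ^ 3)⁻¹ * (1 + 2 * ε ^ 2 * Q) / Real.sqrt 2)) =
          P ^ 2 / 2 - (Q ^ 2 + T / 2) * P - A₁ * Q +
            c ε T A₀ A₁ + ε * R ε T Q P A₀ A₁ := by
  refine ⟨fun ε _ _ A₁ => -A₁ / (2 * ε ^ 2), fun ε T Q P _ _ => ε * Q * P * (P - T),
    fun T Q P A₀ A₁ => ?_, fun ε T Q P A₀ A₁ hε _ => ?_⟩
  · fun_prop
  · have h2 : (Real.sqrt 2)⁻¹ ^ 2 = 2⁻¹ := by
      rw [inv_pow, Real.sq_sqrt] <;> norm_num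
    have h4 : (Real.sqrt 2)⁻¹ ^ 4 = 4⁻¹ := by
      rw [show (4:ℕ) = 2*2 from rfl, pow_mul, h2]; norm_num
    simp only [div_eq_mul_inv]
    ring_nf
    rw [h2, h4]
    field_simp
    ring
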